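/- Let A, Ã ∈ ℂ^{n×n}, let D be a diagonal matrix with nonnegative real entries, and suppose Ã is an ε-SV approximation of A with respect to D_in = D_out = D. Then Ã is a unit-circle ε-approximation of A with respect to degree matrix D: for every z ∈ ℂ with |z| = 1, the matrix D − S_{zA} is positive semidefinite and for all x, y ∈ ℂⁿ, |x*(z·Ã − z·A)y| ≤ (ε/2)·(x*(D − S_{zA})x + y*(D − S_{zA})y), where S_M := (M + M*)/2. -/

import Mathlib

open Matrix ComplexOrder

/-- `Ã` is an `ε`-SV approximation of `A` with respect to the diagonal degree matrices
`D_in = diag d` and `D_out = diag e` (with `D⁻` the pseudo-inverse of a nonnegative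
diagonal matrix, realized by real inversion with convention `0⁻¹ = 0`). -/
noncomputable def IsSVApprox {m n : ℕ} (ε : ℝ) (d : Fin m → ℝ) (e : Fin n → ℝ)
    (A Atil : Matrix (Fin m) (Fin n) ℂ) : Prop :=
  (∀ i, d i = 0 → ∀ j, A i j = 0) ∧
  (∀ j, e j = 0 → ∀ i, A i j = 0) ∧
  ((Matrix.diagonal fun i => (d i : ℂ)) -
      A * (Matrix.diagonal fun j => ((e j)⁻¹ : ℂ)) * Aᴴ).PosSemidef ∧
  ((Matrix.diagonal fun j => (e j : ℂ)) -
      Aᴴ * (Matrix.diagonal fun i => ((d i)⁻¹ : ℂ)) * A).PosSemidef ∧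
  ∀ (x : Fin m → ℂ) (y : Fin n → ℂ),
    ‖star x ⬝ᵥ (Atil - A).mulVec y‖ ≤
      ε / 4 *
        ((star x ⬝ᵥ ((Matrix.diagonal fun i => (d i : ℂ)) -
            A * (Matrix.diagonal fun j => ((e j)⁻¹ : ℂ)) * Aᴴ).mulVec x).re +
         (star y ⬝ᵥ ((Matrix.diagonal fun j => (e j : ℂ)) -
            Aᴴ * (Matrix.diagonal fun i => ((d i)⁻¹ : ℂ)) * A).mulVec y).re)

/-- The symmetrization `S_M := (M + M*)/2`. -/
noncomputable def symPart {n : ℕ} (M : Matrix (Fin n) (Fin n) ℂ) :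
    Matrix (Fin n) (Fin n) ℂ :=
  (2 : ℂ)⁻¹ • (M + Mᴴ)

/-- SV approximation with respect to a diagonal degree matrix `D` implies
unit-circle approximation with respect to `D`. -/
theorem stmt_8 {n : ℕ} (A Atil : Matrix (Fin n) (Fin n) ℂ)
    (d : Fin n → ℝ) (hd : ∀ i, 0 ≤ d i) (ε : ℝ) (hε : 0 ≤ ε)
    (hSV : IsSVApprox ε d d A Atil) :
    ∀ z : ℂ, ‖z‖ = 1 →
      ((Matrix.diagonal fun i => (d i : ℂ)) - symPart (z • A)).PosSemidef ∧
      ∀ x y : Fin n → ℂ,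
        ‖star x ⬝ᵥ (z • Atil - z • A).mulVec y‖ ≤
          ε / 2 *
            ((star x ⬝ᵥ ((Matrix.diagonal fun i => (d i : ℂ)) - symPart (z • A)).mulVec x).re +
             (star y ⬝ᵥ ((Matrix.diagonal fun i => (d i : ℂ)) - symPart (z • A)).mulVec y).re) := by
  obtain ⟨h1, h2, hE, hF, hbound⟩ := hSV
  intro z hz
  set Dm : Matrix (Fin n) (Fin n) ℂ := Matrix.diagonal fun i => (d i : ℂ) with hDm
  set Dinv : Matrix (Fin n) (Fin n) ℂ := Matrix.diagonal fun i => ((d i)⁻¹ : ℂ) with hDinv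
  set P : Matrix (Fin n) (Fin n) ℂ := Matrix.diagonal fun i => (Real.sqrt (d i) : ℂ) with hP
  set Q : Matrix (Fin n) (Fin n) ℂ :=
    Matrix.diagonal fun i => ((Real.sqrt (d i))⁻¹ : ℂ) with hQ
  have hzz : (starRingEnd ℂ) z * z = 1 := by
    rw [mul_comm, Complex.mul_conj]
    norm_cast
    rw [Complex.normSq_eq_norm_sq, hz]; norm_num
  have hzz' : z * (starRingEnd ℂ) z = 1 := by rw [mul_comm]; exact hzz
  have hPP : P * P = Dm := by
    have hfun : (fun i => (Real.sqrt (d i) : ℂ) * (Real.sqrt (d i) : ℂ))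
        = fun i => ((d i : ℝ) : ℂ) := by
      funext i
      rw [← Complex.ofReal_mul, Real.mul_self_sqrt (hd i)]
    rw [hP, hDm, diagonal_mul_diagonal, hfun]
  have hQQ : Q * Q = Dinv := by
    have hfun : (fun i => ((Real.sqrt (d i) : ℂ))⁻¹ * ((Real.sqrt (d i) : ℂ))⁻¹)
        = fun i => ((d i : ℝ) : ℂ)⁻¹ := by
      funext i
      rw [← mul_inv, ← Complex.ofReal_mul, Real.mul_self_sqrt (hd i)]
    rw [hQ, hDinv, diagonal_mul_diagonal, hfun]
  have hPH : Pᴴ = P := by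
    have hfun : star (fun i => (Real.sqrt (d i) : ℂ)) = fun i => (Real.sqrt (d i) : ℂ) := by
      funext i
      simp [Complex.conj_ofReal]
    rw [hP, diagonal_conjTranspose, hfun]
  have hQH : Qᴴ = Q := by
    have hfun : star (fun i => ((Real.sqrt (d i))⁻¹ : ℂ))
        = fun i => ((Real.sqrt (d i))⁻¹ : ℂ) := by
      funext i
      simp [Complex.conj_ofReal]
    rw [hQ, diagonal_conjTranspose, hfun]
  -- the key scalar fact
  have hsc : ∀ i (w : ℂ), (d i = 0 → w = 0) →
      ((Real.sqrt (d i) : ℂ) * ((Real.sqrt (d i))⁻¹ : ℂ)) * w = w := by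
    intro i w hw
    rcases eq_or_ne (d i) 0 with h | h
    · simp [hw h]
    · have hs : Real.sqrt (d i) ≠ 0 :=
        Real.sqrt_ne_zero'.mpr (lt_of_le_of_ne (hd i) (Ne.symm h))
      have hs' : ((Real.sqrt (d i) : ℂ)) ≠ 0 := Complex.ofReal_ne_zero.mpr hs
      rw [mul_inv_cancel₀ hs', one_mul]
  have hPQ : P * Q = Matrix.diagonal fun i =>
      ((Real.sqrt (d i) : ℂ) * ((Real.sqrt (d i))⁻¹ : ℂ)) := by
    rw [hP, hQ, diagonal_mul_diagonal]
  have hQP : Q * P = Matrix.diagonal fun i =>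
      ((Real.sqrt (d i) : ℂ) * ((Real.sqrt (d i))⁻¹ : ℂ)) := by
    rw [hQ, hP, diagonal_mul_diagonal]
    exact congrArg Matrix.diagonal (funext fun i => mul_comm _ _)
  have hPQA : P * Q * A = A := by
    rw [hPQ]; ext i j; rw [diagonal_mul]
    exact hsc i _ (fun h => h1 i h j)
  have hPQAH : P * Q * Aᴴ = Aᴴ := by
    rw [hPQ]; ext i j; rw [diagonal_mul]
    exact hsc i _ (fun h => by simp [conjTranspose_apply, h2 i h j])
  have hAQP : A * (Q * P) = A := by
    rw [hQP]; ext i j; rw [mul_diagonal]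
    rw [mul_comm]
    exact hsc j _ (fun h => h2 j h i)
  have hAHQP : Aᴴ * (Q * P) = Aᴴ := by
    rw [hQP]; ext i j; rw [mul_diagonal]
    rw [mul_comm]
    exact hsc j _ (fun h => by simp [conjTranspose_apply, h1 j h i])
  set B : Matrix (Fin n) (Fin n) ℂ := z • P - Q * Aᴴ with hB
  set C : Matrix (Fin n) (Fin n) ℂ := (starRingEnd ℂ) z • P - Q * A with hC
  have hBH : Bᴴ = (starRingEnd ℂ) z • P - A * Q := by
    rw [hB, conjTranspose_sub, conjTranspose_smul, conjTranspose_mul, hPH, hQH,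
      conjTranspose_conjTranspose]
    rfl
  have hCH : Cᴴ = z • P - Aᴴ * Q := by
    rw [hC, conjTranspose_sub, conjTranspose_smul, conjTranspose_mul, hPH, hQH]
    simp
  have hBB : Bᴴ * B = Dm - (starRingEnd ℂ) z • Aᴴ - z • A + A * Dinv * Aᴴ := by
    rw [hBH, hB, sub_mul, mul_sub, mul_sub, smul_mul_assoc, smul_mul_assoc,
      mul_smul_comm, mul_smul_comm, smul_smul, hzz, one_smul, hPP]
    have e1 : P * (Q * Aᴴ) = Aᴴ := by rw [← Matrix.mul_assoc, hPQAH]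
    have e2 : A * Q * P = A := by rw [Matrix.mul_assoc, hAQP]
    have e3 : A * Q * (Q * Aᴴ) = A * Dinv * Aᴴ := by
      rw [Matrix.mul_assoc, ← Matrix.mul_assoc Q Q Aᴴ, hQQ, ← Matrix.mul_assoc]
    rw [e1, e2, e3]
    abel
  have hCC : Cᴴ * C = Dm - z • A - (starRingEnd ℂ) z • Aᴴ + Aᴴ * Dinv * A := by
    rw [hCH, hC, sub_mul, mul_sub, mul_sub, smul_mul_assoc, smul_mul_assoc,
      mul_smul_comm, mul_smul_comm, smul_smul, hzz', one_smul, hPP]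
    have e1 : P * (Q * A) = A := by rw [← Matrix.mul_assoc, hPQA]
    have e2 : Aᴴ * Q * P = Aᴴ := by rw [Matrix.mul_assoc, hAHQP]
    have e3 : Aᴴ * Q * (Q * A) = Aᴴ * Dinv * A := by
      rw [Matrix.mul_assoc, ← Matrix.mul_assoc Q Q A, hQQ, ← Matrix.mul_assoc]
    rw [e1, e2, e3]
    abel
  have hsym : symPart (z • A) = (2 : ℂ)⁻¹ • (z • A + (starRingEnd ℂ) z • Aᴴ) := by
    rw [symPart, conjTranspose_smul]
    rfl
  have hid1 : Dm - symPart (z • A) = (2 : ℂ)⁻¹ • ((Dm - A * Dinv * Aᴴ) + Bᴴ * B) := by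
    rw [hBB, hsym]
    module
  have hid2 : Dm - symPart (z • A) = (2 : ℂ)⁻¹ • ((Dm - Aᴴ * Dinv * A) + Cᴴ * C) := by
    rw [hCC, hsym]
    module
  have hhalf : (0 : ℂ) ≤ (2 : ℂ)⁻¹ := by
    rw [Complex.le_def]
    norm_num
  have hBBpos := Matrix.posSemidef_conjTranspose_mul_self B
  have hCCpos := Matrix.posSemidef_conjTranspose_mul_self C
  have hsum1 := hE.add hBBpos
  have hsum2 := hF.add hCCpos
  have hpsd : (Dm - symPart (z • A)).PosSemidef := by
    rw [hid1]
    constructor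
    · rw [Matrix.IsHermitian, conjTranspose_smul, hsum1.isHermitian]
      norm_num
    · intro x
      exact (hsum1.smul hhalf).2 x
  refine ⟨hpsd, ?_⟩
  -- quadratic-form inequalities
  have hre : ∀ (M N : Matrix (Fin n) (Fin n) ℂ) (x : Fin n → ℂ),
      (star x ⬝ᵥ ((2 : ℂ)⁻¹ • (M + N)).mulVec x).re
        = 2⁻¹ * ((star x ⬝ᵥ M.mulVec x).re + (star x ⬝ᵥ N.mulVec x).re) := by
    intro M N x
    rw [smul_mulVec, dotProduct_smul, smul_eq_mul, add_mulVec, dotProduct_add]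
    have : ((2 : ℂ)⁻¹) = ((2⁻¹ : ℝ) : ℂ) := by norm_num
    rw [this, Complex.re_ofReal_mul, Complex.add_re]
  have hq1 : ∀ x : Fin n → ℂ,
      (star x ⬝ᵥ (Dm - A * Dinv * Aᴴ).mulVec x).re
        ≤ 2 * (star x ⬝ᵥ (Dm - symPart (z • A)).mulVec x).re := by
    intro x
    have hnn := hBBpos.re_dotProduct_nonneg x
    rw [RCLike.re_to_complex] at hnn
    rw [hid1, hre]
    linarith
  have hq2 : ∀ x : Fin n → ℂ,
      (star x ⬝ᵥ (Dm - Aᴴ * Dinv * A).mulVec x).re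
        ≤ 2 * (star x ⬝ᵥ (Dm - symPart (z • A)).mulVec x).re := by
    intro x
    have hnn := hCCpos.re_dotProduct_nonneg x
    rw [RCLike.re_to_complex] at hnn
    rw [hid2, hre]
    linarith
  intro x y
  have habs : ‖star x ⬝ᵥ (z • Atil - z • A).mulVec y‖
      = ‖star x ⬝ᵥ (Atil - A).mulVec y‖ := by
    rw [← smul_sub, smul_mulVec, dotProduct_smul, smul_eq_mul, norm_mul, hz, one_mul]
  rw [habs]
  have h0x := hpsd.re_dotProduct_nonneg x
  have h0y := hpsd.re_dotProduct_nonneg y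
  rw [RCLike.re_to_complex] at h0x h0y
  have hb := hbound x y
  have hx := hq1 x
  have hy := hq2 y
  set a := (star x ⬝ᵥ (Dm - A * Dinv * Aᴴ).mulVec x).re
  set b := (star y ⬝ᵥ (Dm - Aᴴ * Dinv * A).mulVec y).re
  set c := (star x ⬝ᵥ (Dm - symPart (z • A)).mulVec x).re
  set e := (star y ⬝ᵥ (Dm - symPart (z • A)).mulVec y).re
  calc ‖star x ⬝ᵥ (Atil - A).mulVec y‖ ≤ ε / 4 * (a + b) := hb
    _ ≤ ε / 2 * (c + e) := by nlinarith [mul_nonneg hε (by linarith : (0:ℝ) ≤ 2*c - a + (2*e - b))]
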